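/- Let $\mathcal{R} = (\mathcal{A}, \mathcal{S}, \mathfrak{p})$ be a risk measurement regime on $\mathcal{L}^{\infty}(\Omega, \mathcal{F})$ such that $\rho_{\mathcal{R}}$ is finite and continuous from above. Then there exists a weak reference probability measure: a probability measure $\mathbb{P}$ on $(\Omega, \mathcal{F})$ such that $\rho_{\mathcal{R}}^*(c\mathbb{P}) < \infty$ for a suitable $c > 0$, and for every $A \in \mathcal{F}$: $\mathbb{P}(A) = 0$ if and only if $\mu(A) = 0$ for all $\mu \in \mathrm{dom}(\rho_{\mathcal{R}}^*)$. Moreover, $\mathrm{dom}(\rho_{\mathcal{R}}^*) \subseteq (\mathbf{ca}_{\mathbb{P}})_+$. -/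

import Mathlib

/-!
Statement 6 (Theorem R2): A finite risk measure on `𝓛^∞` which is continuous
from above admits a weak reference probability measure `ℙ`, and
`dom(ρ*) ⊆ (ca_ℙ)₊`.
-/

open MeasureTheory

def BM (Ω : Type*) [MeasurableSpace Ω] : Submodule ℝ (Ω → ℝ) where
  carrier := {f | Measurable f ∧ ∃ C : ℝ, ∀ ω, |f ω| ≤ C}
  add_mem' := by
    rintro f g ⟨hf, Cf, hCf⟩ ⟨hg, Cg, hCg⟩
    exact ⟨hf.add hg, Cf + Cg, fun ω =>
      (abs_add_le _ _).trans (add_le_add (hCf ω) (hCg ω))⟩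
  zero_mem' := ⟨measurable_const, 0, fun ω => by simp⟩
  smul_mem' := by
    rintro c f ⟨hf, Cf, hCf⟩
    refine ⟨hf.const_smul c, |c| * Cf, fun ω => ?_⟩
    have h : |(c • f) ω| = |c| * |f ω| := by simp [abs_mul]
    rw [h]
    exact mul_le_mul_of_nonneg_left (hCf ω) (abs_nonneg c)

variable {Ω : Type*} [MeasurableSpace Ω]

noncomputable instance : PartialOrder (BM Ω) :=
  PartialOrder.lift (fun f => (f : Ω → ℝ)) Subtype.coe_injective

noncomputable def indBM (A : Set Ω) (hA : MeasurableSet A) : BM Ω :=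
  ⟨A.indicator fun _ => (1 : ℝ),
    (measurable_const (a := (1 : ℝ))).indicator hA, 1, fun ω => by
      by_cases h : ω ∈ A <;> simp [Set.indicator_apply, h]⟩

noncomputable def rstar (ρ : BM Ω → ℝ) (μ : BM Ω → ℝ) : EReal :=
  ⨆ X : BM Ω, ((μ X - ρ X : ℝ) : EReal)

/-- Membership in `ba`, the dual of `𝓛^∞`. -/
def MemBa (μ : BM Ω → ℝ) : Prop :=
  IsLinearMap ℝ μ ∧ ∃ M : ℝ, ∀ (X : BM Ω) (C : ℝ),
    (∀ ω, |(X : Ω → ℝ) ω| ≤ C) → |μ X| ≤ M * C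

/-- The effective domain of `ρ*` inside `ba`. -/
def domStar (ρ : BM Ω → ℝ) : Set (BM Ω → ℝ) :=
  {μ | MemBa μ ∧ rstar ρ μ ≠ ⊤}


open Set Filter

set_option maxHeartbeats 1000000
set_option synthInstance.maxHeartbeats 400000


/-- Every finite convex function on a real vector space admits a linear minorant of
`x ↦ f x - f 0`. -/
lemma exists_linear_le_of_convexfn {V : Type*} [AddCommGroup V] [Module ℝ V] (f : V → ℝ)
    (hf : ∀ (a b : ℝ) (x y : V), 0 ≤ a → 0 ≤ b → a + b = 1 →
      f (a • x + b • y) ≤ a * f x + b * f y) :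
    ∃ ℓ : V →ₗ[ℝ] ℝ, ∀ x, ℓ x ≤ f x - f 0 := by
  classical
  -- difference quotients
  set q : V → ℝ → ℝ := fun v t => (f (t • v) - f 0) / t with hq
  have hqmono : ∀ v : V, ∀ s t : ℝ, 0 < s → s ≤ t → q v s ≤ q v t := by
    intro v s t hs hst
    have ht : 0 < t := hs.trans_le hst
    have h1 : f (s • v) ≤ (s / t) * f (t • v) + (1 - s / t) * f 0 := by
      have := hf (s / t) (1 - s / t) (t • v) 0 (by positivity)
        (by rw [sub_nonneg]; exact div_le_one_of_le₀ hst ht.le) (by ring)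
      simpa [smul_smul, div_mul_cancel₀, ht.ne'] using this
    have h2 := mul_le_mul_of_nonneg_right h1 ht.le
    have e : (s / t * f (t • v) + (1 - s / t) * f 0) * t = s * f (t • v) + (t - s) * f 0 := by
      field_simp
    rw [e] at h2
    rw [hq, div_le_div_iff₀ hs ht]
    nlinarith [h2]
  have hqlb : ∀ v : V, ∀ t : ℝ, 0 < t → f 0 - f (-v) ≤ q v t := by
    intro v t ht
    have h1 : f 0 ≤ (1 / (t + 1)) * f (t • v) + (t / (t + 1)) * f (-v) := by
      have h := hf (1 / (t + 1)) (t / (t + 1)) (t • v) (-v) (by positivity) (by positivity)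
        (by field_simp; ring)
      have he : (1 / (t + 1)) • (t • v) + (t / (t + 1)) • (-v) = 0 := by
        rw [smul_smul, smul_neg, ← sub_eq_add_neg, ← sub_smul]
        have : 1 / (t + 1) * t - t / (t + 1) = 0 := by field_simp; ring
        rw [this, zero_smul]
      rw [he] at h
      exact h
    have ht1 : (0:ℝ) < t + 1 := by linarith
    have h2 := mul_le_mul_of_nonneg_right h1 ht1.le
    have e : (1 / (t + 1) * f (t • v) + t / (t + 1) * f (-v)) * (t + 1)
        = f (t • v) + t * f (-v) := by field_simp
    rw [e] at h2
    rw [hq, le_div_iff₀ ht]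
    nlinarith [h2]
  set Qs : V → Set ℝ := fun v => {r | ∃ t : ℝ, 0 < t ∧ r = q v t} with hQs
  have hQne : ∀ v, (Qs v).Nonempty := fun v => ⟨q v 1, 1, one_pos, rfl⟩
  have hQbdd : ∀ v, BddBelow (Qs v) := by
    rintro v
    exact ⟨f 0 - f (-v), by rintro r ⟨t, ht, rfl⟩; exact hqlb v t ht⟩
  set N : V → ℝ := fun v => sInf (Qs v) with hN
  have hNle : ∀ v (t : ℝ), 0 < t → N v ≤ q v t := fun v t ht =>
    csInf_le (hQbdd v) ⟨t, ht, rfl⟩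
  have hNapprox : ∀ v, ∀ ε > (0:ℝ), ∃ t : ℝ, 0 < t ∧ q v t < N v + ε := by
    intro v ε hε
    obtain ⟨r, ⟨t, ht, rfl⟩, hr⟩ := exists_lt_of_csInf_lt (hQne v) (by linarith : sInf (Qs v) < N v + ε)
    exact ⟨t, ht, hr⟩
  -- positive homogeneity
  have hNhom : ∀ (c : ℝ), 0 < c → ∀ v, N (c • v) = c * N v := by
    intro c hc v
    have key : ∀ t : ℝ, 0 < t → q (c • v) t = c * q v (t * c) := by
      intro t ht
      rw [hq]
      simp only [smul_smul]
      rw [mul_comm t c]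
      field_simp
    apply le_antisymm
    · -- N (c•v) ≤ c * N v
      refine le_of_forall_pos_le_add fun ε hε => ?_
      obtain ⟨t, ht, hlt⟩ := hNapprox v (ε / c) (by positivity)
      have h1 : N (c • v) ≤ q (c • v) (t / c) := hNle _ _ (by positivity)
      rw [key (t / c) (by positivity), div_mul_cancel₀ _ hc.ne'] at h1
      calc N (c • v) ≤ c * q v t := h1
        _ ≤ c * (N v + ε / c) := by nlinarith
        _ = c * N v + ε := by field_simp
    · refine le_of_forall_pos_le_add fun ε hε => ?_
      obtain ⟨t, ht, hlt⟩ := hNapprox (c • v) ε hε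
      have h1 : N v ≤ q v (t * c) := hNle _ _ (by positivity)
      rw [key t ht] at hlt
      nlinarith
  -- subadditivity
  have hNadd : ∀ v w : V, N (v + w) ≤ N v + N w := by
    intro v w
    refine le_of_forall_pos_le_add fun ε hε => ?_
    obtain ⟨t1, ht1, h1⟩ := hNapprox v (ε/2) (by positivity)
    obtain ⟨t2, ht2, h2⟩ := hNapprox w (ε/2) (by positivity)
    set t := min t1 t2 with htdef
    have ht : 0 < t := lt_min ht1 ht2
    have hmid : f ((t/2) • (v + w)) ≤ (1/2) * f (t • v) + (1/2) * f (t • w) := by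
      have := hf (1/2) (1/2) (t • v) (t • w) (by norm_num) (by norm_num) (by norm_num)
      have he : (1/2 : ℝ) • (t • v) + (1/2 : ℝ) • (t • w) = (t/2) • (v + w) := by
        rw [smul_smul, smul_smul, smul_add]
        ring_nf
      rw [he] at this
      exact this
    have hq3 : q (v + w) (t/2) ≤ q v t + q w t := by
      rw [hq]
      rw [← add_div, div_le_div_iff₀ (by positivity) ht]
      nlinarith
    have hqa : q v t ≤ q v t1 := hqmono v t t1 ht (min_le_left _ _)
    have hqb : q w t ≤ q w t2 := hqmono w t t2 ht (min_le_right _ _)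
    calc N (v + w) ≤ q (v + w) (t/2) := hNle _ _ (by positivity)
      _ ≤ q v t + q w t := hq3
      _ ≤ q v t1 + q w t2 := add_le_add hqa hqb
      _ ≤ (N v + ε/2) + (N w + ε/2) := add_le_add h1.le h2.le
      _ = N v + N w + ε := by ring
  -- N 0 = 0
  have hN0 : N 0 = 0 := by
    have h1 : ∀ t : ℝ, 0 < t → q 0 t = 0 := by
      intro t ht; rw [hq]; simp
    apply le_antisymm
    · have := hNle 0 1 one_pos; rw [h1 1 one_pos] at this; exact this
    · have := hqlb 0 1 one_pos
      rw [h1 1 one_pos] at this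
      have h0 : f 0 - f (-(0:V)) = 0 := by simp
      have h2 : BddBelow (Qs 0) := hQbdd 0
      refine le_csInf (hQne 0) ?_
      rintro r ⟨t, ht, rfl⟩
      rw [h1 t ht]
  -- Hahn-Banach
  obtain ⟨g, -, hg⟩ := exists_extension_of_le_sublinear ⟨⊥, 0⟩ N hNhom hNadd
    (fun x => by
      have : (x : V) = 0 := by
        rcases x with ⟨x, hx⟩
        simpa using hx
      simp [this, hN0])
  refine ⟨g, fun x => ?_⟩
  have := hg x
  have h1 : N x ≤ q x 1 := hNle x 1 one_pos
  rw [hq] at h1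
  simp only [one_smul, div_one] at h1
  linarith



lemma exhaustion {Ω : Type*} [MeasurableSpace Ω] {M : Type*} (D : Set M) (w : M → Set Ω → ℝ)
    (hD : D.Nonempty)
    (h0 : ∀ μ ∈ D, ∀ A : Set Ω, MeasurableSet A → 0 ≤ w μ A)
    (hC : ∃ C : ℝ, ∀ μ ∈ D, ∀ A : Set Ω, MeasurableSet A → w μ A ≤ C)
    (hempty : ∀ μ ∈ D, w μ ∅ = 0)
    (hsub2 : ∀ μ ∈ D, ∀ A B C' : Set Ω, MeasurableSet A → MeasurableSet B → MeasurableSet C' →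
      A ⊆ B ∪ C' → w μ A ≤ w μ B + w μ C')
    (hnull : ∀ μ ∈ D, ∀ (A : ℕ → Set Ω), (∀ k, MeasurableSet (A k)) →
      (∀ k, w μ (A k) = 0) → w μ (⋃ k, A k) = 0)
    (hunif : ∀ (B : ℕ → Set Ω), (∀ n, MeasurableSet (B n)) →
      (∀ n m, n ≤ m → B m ⊆ B n) → (⋂ n, B n) = ∅ →
      ∀ ε > (0:ℝ), ∃ N, ∀ n ≥ N, ∀ μ ∈ D, w μ (B n) ≤ ε) :
    ∃ f : ℕ → M, (∀ n, f n ∈ D) ∧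
      ∀ A : Set Ω, MeasurableSet A → (∀ n, w (f n) A = 0) → ∀ μ ∈ D, w μ A = 0 := by
  classical
  obtain ⟨μ₀, hμ₀⟩ := hD
  obtain ⟨C, hC⟩ := hC
  set T : (ℕ → M × Set Ω) → ℕ → Set ℝ := fun g n =>
    {r | ∃ μ ∈ D, ∃ A : Set Ω, MeasurableSet A ∧
      (∀ i < n, (g i).1 ∈ D → w (g i).1 A = 0) ∧ r = w μ A} with hT
  have hTne : ∀ g n, (T g n).Nonempty := fun g n =>
    ⟨w μ₀ ∅, μ₀, hμ₀, ∅, MeasurableSet.empty,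
      fun i _ h => hempty _ h, rfl⟩
  have hTbdd : ∀ g n, BddAbove (T g n) := by
    intro g n
    refine ⟨C, ?_⟩
    rintro r ⟨μ, hμ, A, hA, -, rfl⟩
    exact hC μ hμ A hA
  set τ : (ℕ → M × Set Ω) → ℕ → ℝ := fun g n => sSup (T g n) with hτ
  have ex : ∀ (g : ℕ → M × Set Ω) (n : ℕ), ∃ x : M × Set Ω, x.1 ∈ D ∧ MeasurableSet x.2 ∧
      (∀ i < n, (g i).1 ∈ D → w (g i).1 x.2 = 0) ∧ τ g n ≤ 2 * w x.1 x.2 := by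
    intro g n
    by_cases h : 0 < τ g n
    · obtain ⟨r, hr, hlt⟩ := exists_lt_of_lt_csSup (hTne g n) (half_lt_self h)
      obtain ⟨μ, hμ, A, hA, hnu, rfl⟩ := hr
      exact ⟨(μ, A), hμ, hA, hnu, by dsimp; linarith⟩
    · push_neg at h
      refine ⟨(μ₀, ∅), hμ₀, MeasurableSet.empty, fun i _ hd => hempty _ hd, ?_⟩
      rw [hempty μ₀ hμ₀]
      linarith
  set pick : (ℕ → M × Set Ω) → ℕ → M × Set Ω := fun g n => Classical.choose (ex g n) with hpick
  set state : ℕ → ℕ → M × Set Ω := fun n => Nat.rec (fun _ => (μ₀, ∅))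
    (fun n st => Function.update st n (pick st n)) n with hstate
  set seq : ℕ → M × Set Ω := fun n => pick (state n) n with hseq
  have state_succ : ∀ n, state (n + 1) = Function.update (state n) n (seq n) := fun n => rfl
  have stable : ∀ m n, m < n → state n m = seq m := by
    intro m n
    induction n with
    | zero => omega
    | succ n ih =>
      intro hm
      rw [state_succ n]
      rcases Nat.lt_succ_iff_lt_or_eq.1 hm with h | h
      · rw [Function.update_of_ne (by omega), ih h]
      · subst h; rw [Function.update_self]
  have spec : ∀ n, (seq n).1 ∈ D ∧ MeasurableSet (seq n).2 ∧
      (∀ i < n, (state n i).1 ∈ D → w (state n i).1 (seq n).2 = 0) ∧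
      τ (state n) n ≤ 2 * w (seq n).1 (seq n).2 := fun n => Classical.choose_spec (ex (state n) n)
  have hmem : ∀ n, (seq n).1 ∈ D := fun n => (spec n).1
  have hmeas : ∀ n, MeasurableSet (seq n).2 := fun n => (spec n).2.1
  have P3 : ∀ n, ∀ i < n, w (seq i).1 (seq n).2 = 0 := by
    intro n i hi
    have := (spec n).2.2.1 i hi
    rw [stable i n hi] at this
    exact this (hmem i)
  -- Key 1
  have key1 : ∀ A : Set Ω, MeasurableSet A → (∀ n, w (seq n).1 A = 0) →
      ∀ μ ∈ D, ∀ n, w μ A ≤ τ (state n) n := by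
    intro A hA hnA μ hμ n
    refine le_csSup (hTbdd _ _) ?_
    exact ⟨μ, hμ, A, hA, fun i hi _ => by rw [stable i n hi]; exact hnA i, rfl⟩
  -- Key 2
  have key2 : ∀ ε > (0:ℝ), ∃ n, τ (state n) n ≤ ε := by
    intro ε hε
    set E : ℕ → Set Ω := fun n => ⋃ m, (seq (n + m)).2 with hE
    have hEmeas : ∀ n, MeasurableSet (E n) := fun n => MeasurableSet.iUnion fun m => hmeas _
    have hEanti : ∀ n n', n ≤ n' → E n' ⊆ E n := by
      intro n n' hnn'
      refine iUnion_subset fun m => ?_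
      have : n' + m = n + (n' - n + m) := by omega
      rw [this]
      exact subset_iUnion (fun k => (seq (n + k)).2) (n' - n + m)
    set EI : Set Ω := ⋂ n, E n with hEI
    have hEImeas : MeasurableSet EI := MeasurableSet.iInter fun n => hEmeas n
    set B : ℕ → Set Ω := fun n => E n \ EI with hB
    have hBmeas : ∀ n, MeasurableSet (B n) := fun n => (hEmeas n).diff hEImeas
    have hBanti : ∀ n m, n ≤ m → B m ⊆ B n := fun n m h =>
      diff_subset_diff_left (hEanti n m h)
    have hBint : (⋂ n, B n) = ∅ := by
      ext x
      simp only [mem_iInter, mem_empty_iff_false, iff_false]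
      intro hx
      have hxEI : x ∈ EI := mem_iInter.2 fun n => ((hx n).1)
      exact (hx 0).2 hxEI
    obtain ⟨N, hN⟩ := hunif B hBmeas hBanti hBint (ε / 2) (by linarith)
    refine ⟨N, ?_⟩
    have hAsub : (seq N).2 ⊆ B N ∪ E (N + 1) := by
      intro x hx
      by_cases hxEI : x ∈ EI
      · exact Or.inr (mem_iInter.1 hxEI (N + 1))
      · refine Or.inl ⟨?_, hxEI⟩
        have : N + 0 = N := by omega
        exact mem_iUnion.2 ⟨0, by rw [this]; exact hx⟩
    have hwE : w (seq N).1 (E (N + 1)) = 0 := by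
      refine hnull _ (hmem N) (fun m => (seq (N + 1 + m)).2) (fun m => hmeas _) fun m => ?_
      exact P3 (N + 1 + m) N (by omega)
    have hwB : w (seq N).1 (B N) ≤ ε / 2 := hN N le_rfl _ (hmem N)
    have hle : w (seq N).1 (seq N).2 ≤ ε / 2 := by
      have := hsub2 _ (hmem N) (seq N).2 (B N) (E (N + 1)) (hmeas N) (hBmeas N)
        (hEmeas (N + 1)) hAsub
      rw [hwE] at this
      linarith
    have := (spec N).2.2.2
    linarith
  refine ⟨fun n => (seq n).1, hmem, ?_⟩
  intro A hA hnA μ hμ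
  have h1 : ∀ ε > (0:ℝ), w μ A ≤ ε := by
    intro ε hε
    obtain ⟨n, hn⟩ := key2 ε hε
    exact (key1 A hA hnA μ hμ n).trans hn
  have h2 : w μ A ≤ 0 := le_of_forall_pos_le_add (by intro ε hε; simpa using h1 ε hε)
  exact le_antisymm h2 (h0 μ hμ A hA)

lemma bm_le_iff {X Y : BM Ω} : X ≤ Y ↔ ∀ ω, (X : Ω → ℝ) ω ≤ (Y : Ω → ℝ) ω := Iff.rfl

lemma indBM_apply (A : Set Ω) (hA : MeasurableSet A) (ω : Ω) :
    ((indBM A hA : BM Ω) : Ω → ℝ) ω = A.indicator (fun _ => (1:ℝ)) ω := rfl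

lemma indBM_nonneg (A : Set Ω) (hA : MeasurableSet A) : (0:BM Ω) ≤ indBM A hA := by
  intro ω
  simp only [indBM_apply]
  by_cases h : ω ∈ A <;> simp [Set.indicator_apply, h]

lemma bm_exists_bound (X : BM Ω) : ∃ C : ℝ, 0 ≤ C ∧ ∀ ω, |(X : Ω → ℝ) ω| ≤ C := by
  obtain ⟨h, C, hC⟩ := X.2
  exact ⟨max C 0, le_max_right _ _, fun ω => (hC ω).trans (le_max_left _ _)⟩

lemma bm_integrable (X : BM Ω) (ν : Measure Ω) [IsFiniteMeasure ν] :
    Integrable (fun ω => (X : Ω → ℝ) ω) ν := by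
  obtain ⟨C, hC0, hC⟩ := bm_exists_bound X
  exact (integrable_const C).mono' X.2.1.aestronglyMeasurable
    (Filter.Eventually.of_forall fun ω => by simpa using hC ω)

lemma indBM_union_disjoint {A B : Set Ω} (hA : MeasurableSet A) (hB : MeasurableSet B)
    (hd : Disjoint A B) :
    indBM (A ∪ B) (hA.union hB) = indBM A hA + indBM B hB := by
  apply Subtype.ext
  show (A ∪ B).indicator _ = _
  rw [Set.indicator_union_of_disjoint hd]
  rfl

/-- Measure construction and integral representation for a positive, bounded,
sequentially order-continuous linear functional on `BM Ω`. -/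
lemma exists_repr_measure (μ : BM Ω → ℝ)
    (hlin : IsLinearMap ℝ μ)
    (hpos : ∀ X : BM Ω, 0 ≤ X → 0 ≤ μ X)
    (hbd : ∃ Mb : ℝ, 0 ≤ Mb ∧ ∀ (X : BM Ω) (C : ℝ),
      (∀ ω, |(X : Ω → ℝ) ω| ≤ C) → |μ X| ≤ Mb * C)
    (hup : ∀ (X : ℕ → BM Ω) (Y : BM Ω), (∀ n m : ℕ, n ≤ m → X n ≤ X m) →
      (∀ ω, Tendsto (fun n => (X n : Ω → ℝ) ω) atTop (nhds ((Y : Ω → ℝ) ω))) →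
      Tendsto (fun n => μ (X n)) atTop (nhds (μ Y))) :
    ∃ ν : Measure Ω, IsFiniteMeasure ν ∧
      (∀ (A : Set Ω) (hA : MeasurableSet A), ν A = ENNReal.ofReal (μ (indBM A hA))) ∧
      ∀ X : BM Ω, μ X = ∫ ω, (X : Ω → ℝ) ω ∂ν := by
  classical
  obtain ⟨Mb, hMb0, hbd⟩ := hbd
  -- countable additivity
  have mU : ∀ ⦃f : ℕ → Set Ω⦄ (h : ∀ i, MeasurableSet (f i)), Pairwise (Function.onFun Disjoint f) →
      ENNReal.ofReal (μ (indBM (⋃ i, f i) (MeasurableSet.iUnion h))) =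
      ∑' i, ENNReal.ofReal (μ (indBM (f i) (h i))) := by
    intro f h hdisj
    set a : ℕ → ℝ := fun i => μ (indBM (f i) (h i)) with ha
    have ha0 : ∀ i, 0 ≤ a i := fun i => hpos _ (indBM_nonneg _ _)
    set P : ℕ → Set Ω := fun n => ⋃ i ∈ Finset.range n, f i with hP
    have hPmeas : ∀ n, MeasurableSet (P n) :=
      fun n => (Finset.range n).measurableSet_biUnion (fun i _ => h i)
    have hPsucc : ∀ n, P (n + 1) = P n ∪ f n := by
      intro n
      rw [hP]
      simp only [Finset.range_add_one, Finset.set_biUnion_insert]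
      exact Set.union_comm _ _
    have hPdisj : ∀ n, Disjoint (P n) (f n) := by
      intro n
      rw [Set.disjoint_left]
      rintro x hx hxn
      obtain ⟨i, hi, hxi⟩ := by simpa [hP] using hx
      exact Set.disjoint_left.1 (hdisj (by omega : i ≠ n)) hxi hxn
    have hpartial : ∀ n, μ (indBM (P n) (hPmeas n)) = ∑ i ∈ Finset.range n, a i := by
      intro n
      induction n with
      | zero =>
        have : P 0 = ∅ := by simp [hP]
        have h0 : indBM (P 0) (hPmeas 0) = 0 := by
          apply Subtype.ext
          show (P 0).indicator _ = _
          rw [this]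
          simp
          rfl
        rw [h0]
        simpa using hlin.map_zero
      | succ n ih =>
        have : indBM (P (n+1)) (hPmeas (n+1)) = indBM (P n) (hPmeas n) + indBM (f n) (h n) := by
          have e := indBM_union_disjoint (hPmeas n) (h n) (hPdisj n)
          rw [← e]
          congr 1
          exact hPsucc n
        rw [this, hlin.map_add, ih, Finset.sum_range_succ]
    -- convergence of partial unions
    have hmono : ∀ n m : ℕ, n ≤ m → indBM (P n) (hPmeas n) ≤ indBM (P m) (hPmeas m) := by
      intro n m hnm ω
      simp only [indBM_apply]
      apply Set.indicator_le_indicator_of_subset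
      · exact Set.biUnion_subset_biUnion_left (Finset.range_subset_range.2 hnm)
      · intro x; norm_num
    have hptw : ∀ ω, Tendsto (fun n => ((indBM (P n) (hPmeas n) : BM Ω) : Ω → ℝ) ω) atTop
        (nhds (((indBM (⋃ i, f i) (MeasurableSet.iUnion h) : BM Ω) : Ω → ℝ) ω)) := by
      intro ω
      simp only [indBM_apply]
      by_cases hω : ω ∈ ⋃ i, f i
      · obtain ⟨i0, hi0⟩ := mem_iUnion.1 hω
        have hval : (⋃ i, f i).indicator (fun _ => (1:ℝ)) ω = 1 := by
          simp [Set.indicator_of_mem hω]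
        rw [hval]
        apply tendsto_atTop_of_eventually_const (i₀ := i0 + 1)
        intro n hn
        have : ω ∈ P n := by
          refine Set.mem_biUnion ?_ hi0
          exact Finset.mem_range.2 (by omega)
        simp [Set.indicator_of_mem this]
      · have hval : (⋃ i, f i).indicator (fun _ => (1:ℝ)) ω = 0 := by
          simp [Set.indicator_of_notMem hω]
        rw [hval]
        have : ∀ n, (P n).indicator (fun _ => (1:ℝ)) ω = 0 := by
          intro n
          apply Set.indicator_of_notMem
          intro hc
          apply hω
          obtain ⟨i, hi, hxi⟩ := by simpa [hP] using hc
          exact mem_iUnion.2 ⟨i, hxi⟩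
        simp only [this]
        exact tendsto_const_nhds
    have hlim := hup _ _ hmono hptw
    rw [show (fun n => μ (indBM (P n) (hPmeas n))) = fun n => ∑ i ∈ Finset.range n, a i
      from funext hpartial] at hlim
    set L := μ (indBM (⋃ i, f i) (MeasurableSet.iUnion h)) with hL
    have hmono' : Monotone fun n => ∑ i ∈ Finset.range n, a i :=
      monotone_nat_of_le_succ (fun n => by rw [Finset.sum_range_succ]; linarith [ha0 n])
    have hble : ∀ n, ∑ i ∈ Finset.range n, a i ≤ L := fun n => hmono'.ge_of_tendsto hlim n
    have hsumm : Summable a := summable_of_sum_range_le ha0 hble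
    have htsum : ∑' i, a i = L := tendsto_nhds_unique hsumm.hasSum.tendsto_sum_nat hlim
    rw [← htsum, ENNReal.ofReal_tsum_of_nonneg ha0 hsumm]
  -- the measure
  have m0 : ENNReal.ofReal (μ (indBM ∅ MeasurableSet.empty)) = 0 := by
    have he : indBM (∅ : Set Ω) MeasurableSet.empty = 0 := by
      apply Subtype.ext
      show (∅ : Set Ω).indicator _ = _
      simp
      rfl
    rw [he, hlin.map_zero]
    simp
  set ν : Measure Ω := Measure.ofMeasurable
    (fun A hA => ENNReal.ofReal (μ (indBM A hA))) m0 mU with hν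
  have happly : ∀ (A : Set Ω) (hA : MeasurableSet A),
      ν A = ENNReal.ofReal (μ (indBM A hA)) := by
    intro A hA
    exact Measure.ofMeasurable_apply A hA
  have hfin : IsFiniteMeasure ν := by
    constructor
    rw [happly _ MeasurableSet.univ]
    exact ENNReal.ofReal_lt_top
  haveI := hfin
  refine ⟨ν, hfin, happly, ?_⟩
  -- integral representation
  intro X
  obtain ⟨C, hC0, hC⟩ := bm_exists_bound X
  have hXm : Measurable ((X : Ω → ℝ)) := X.2.1
  have key : ∀ k : ℕ, |μ X - ∫ ω, (X : Ω → ℝ) ω ∂ν| ≤ (Mb + (ν Set.univ).toReal) * (1/2)^k := by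
    intro k
    have h2k : (0:ℝ) < 2^k := by positivity
    have hfl : Measurable fun ω => ⌊(2:ℝ)^k * (X : Ω → ℝ) ω⌋ :=
      (hXm.const_mul ((2:ℝ)^k)).floor
    set A : ℤ → Set Ω := fun z => {ω | ⌊(2:ℝ)^k * (X : Ω → ℝ) ω⌋ = z} with hA
    have hAz : ∀ z, MeasurableSet (A z) := fun z => hfl (measurableSet_singleton z)
    set Ic : Finset ℤ := Finset.Icc (-(⌈(2:ℝ)^k * C⌉)) ⌈(2:ℝ)^k * C⌉ with hIc
    set g : BM Ω := ∑ z ∈ Ic, ((z:ℝ)/2^k) • indBM (A z) (hAz z) with hg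
    have coe_g : ∀ ω, (g : Ω → ℝ) ω = ∑ z ∈ Ic, (A z).indicator (fun _ => (z:ℝ)/2^k) ω := by
      intro ω
      have e1 : ((g : BM Ω) : Ω → ℝ) = ∑ z ∈ Ic, (((z:ℤ):ℝ)/2^k) • ((indBM (A z) (hAz z) : BM Ω) : Ω → ℝ) := by
        rw [hg]
        have := map_sum (BM Ω).subtype (fun z : ℤ => (((z:ℤ):ℝ)/2^k) • indBM (A z) (hAz z)) Ic
        simpa using this
      rw [e1, Finset.sum_apply]
      refine Finset.sum_congr rfl fun z _ => ?_
      simp only [Pi.smul_apply, indBM_apply, smul_eq_mul]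
      by_cases hmem : ω ∈ A z
      · simp [Set.indicator_of_mem hmem]
      · simp [Set.indicator_of_notMem hmem]
    have hz0mem : ∀ ω, ⌊(2:ℝ)^k * (X : Ω → ℝ) ω⌋ ∈ Ic := by
      intro ω
      rw [hIc, Finset.mem_Icc]
      constructor
      · rw [Int.le_floor]
        push_cast
        have h1 : (2:ℝ)^k * C ≤ ⌈(2:ℝ)^k * C⌉ := Int.le_ceil _
        have h2 : -C ≤ (X : Ω → ℝ) ω := neg_le_of_abs_le (hC ω)
        nlinarith
      · have h1 : (2:ℝ)^k * (X : Ω → ℝ) ω ≤ (2:ℝ)^k * C := by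
          have := le_of_abs_le (hC ω)
          nlinarith
        exact (Int.floor_le_floor h1).trans (Int.floor_le_ceil _)
    have g_apply : ∀ ω, (g : Ω → ℝ) ω = ((⌊(2:ℝ)^k * (X : Ω → ℝ) ω⌋ : ℝ))/2^k := by
      intro ω
      rw [coe_g ω]
      rw [Finset.sum_eq_single_of_mem _ (hz0mem ω)]
      · have hm : ω ∈ A ⌊(2:ℝ)^k * (X : Ω → ℝ) ω⌋ := rfl
        exact Set.indicator_of_mem hm _
      · intro b _ hb
        apply Set.indicator_of_notMem
        intro hc
        have hcc : ⌊(2:ℝ)^k * (X : Ω → ℝ) ω⌋ = b := hc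
        exact hb hcc.symm
    have err : ∀ ω, |((X - g : BM Ω) : Ω → ℝ) ω| ≤ (1/2)^k := by
      intro ω
      have e : ((X - g : BM Ω) : Ω → ℝ) ω = (X : Ω → ℝ) ω - (g : Ω → ℝ) ω := rfl
      rw [e, g_apply ω]
      set y := (2:ℝ)^k * (X : Ω → ℝ) ω with hy
      have h1 : (⌊y⌋ : ℝ) ≤ y := Int.floor_le y
      have h2 : y < ⌊y⌋ + 1 := Int.lt_floor_add_one y
      have hXω : (X : Ω → ℝ) ω = y / 2^k := by rw [hy]; field_simp
      have hpow : (1/2:ℝ)^k = 1/2^k := one_div_pow _ _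
      rw [hXω, abs_le, hpow]
      have hsub : y / 2^k - (⌊y⌋:ℝ)/2^k = (y - ⌊y⌋)/2^k := (sub_div _ _ _).symm
      rw [hsub]
      constructor
      · have h3 : (0:ℝ) ≤ (y - ⌊y⌋)/2^k := div_nonneg (by linarith) h2k.le
        have h4 : (0:ℝ) < 1/2^k := by positivity
        linarith
      · have h5 : y - (⌊y⌋:ℝ) ≤ 1 := by linarith
        gcongr
    have hμg : μ g = ∑ z ∈ Ic, ((z:ℝ)/2^k) * μ (indBM (A z) (hAz z)) := by
      rw [hg]
      have h := map_sum (IsLinearMap.mk' μ hlin)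
        (fun z : ℤ => ((z:ℝ)/2^k) • indBM (A z) (hAz z)) Ic
      simp only [IsLinearMap.mk'_apply, LinearMap.map_smul, smul_eq_mul] at h
      exact h
    have hint : ∀ z ∈ Ic, Integrable (fun ω => (A z).indicator (fun _ => (z:ℝ)/2^k) ω) ν :=
      fun z _ => (integrable_const _).indicator (hAz z)
    have hIg : ∫ ω, (g : Ω → ℝ) ω ∂ν = ∑ z ∈ Ic, ((z:ℝ)/2^k) * (ν (A z)).toReal := by
      have e : (fun ω => (g : Ω → ℝ) ω) = fun ω => ∑ z ∈ Ic, (A z).indicator (fun _ => (z:ℝ)/2^k) ω :=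
        funext coe_g
      rw [e, integral_finset_sum Ic hint]
      refine Finset.sum_congr rfl fun z _ => ?_
      rw [integral_indicator_const _ (hAz z), smul_eq_mul, mul_comm, measureReal_def]
    have hνA : ∀ z, (ν (A z)).toReal = μ (indBM (A z) (hAz z)) := fun z => by
      rw [happly _ (hAz z), ENNReal.toReal_ofReal (hpos _ (indBM_nonneg _ _))]
    have hIg' : ∫ ω, (g : Ω → ℝ) ω ∂ν = μ g := by
      rw [hIg, hμg]
      exact Finset.sum_congr rfl fun z _ => by rw [hνA z]
    have hb1 : |μ X - μ g| ≤ Mb * (1/2)^k := by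
      have := hbd (X - g) ((1/2)^k) err
      rwa [hlin.map_sub X g] at this
    have hintX : Integrable (fun ω => (X : Ω → ℝ) ω) ν := bm_integrable X ν
    have hintg : Integrable (fun ω => (g : Ω → ℝ) ω) ν := bm_integrable g ν
    have hb2 : |∫ ω, (X : Ω → ℝ) ω ∂ν - ∫ ω, (g : Ω → ℝ) ω ∂ν| ≤ (1/2)^k * (ν Set.univ).toReal := by
      rw [← integral_sub hintX hintg]
      have h := norm_integral_le_of_norm_le_const (μ := ν)
        (f := fun ω => (X : Ω → ℝ) ω - (g : Ω → ℝ) ω) (C := (1/2)^k)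
        (Eventually.of_forall fun ω => by
          simpa [Real.norm_eq_abs] using err ω)
      simpa [Real.norm_eq_abs, measureReal_def] using h
    have e2 : μ X - ∫ ω, (X : Ω → ℝ) ω ∂ν
        = (μ X - μ g) - (∫ ω, (X : Ω → ℝ) ω ∂ν - ∫ ω, (g : Ω → ℝ) ω ∂ν) := by
      rw [hIg']
      ring
    rw [e2]
    calc |(μ X - μ g) - (∫ ω, (X : Ω → ℝ) ω ∂ν - ∫ ω, (g : Ω → ℝ) ω ∂ν)|
        ≤ |μ X - μ g| + |∫ ω, (X : Ω → ℝ) ω ∂ν - ∫ ω, (g : Ω → ℝ) ω ∂ν| := abs_sub _ _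
      _ ≤ Mb * (1/2)^k + (1/2)^k * (ν Set.univ).toReal := add_le_add hb1 hb2
      _ = (Mb + (ν Set.univ).toReal) * (1/2)^k := by ring
  have hlim : Tendsto (fun k : ℕ => (Mb + (ν Set.univ).toReal) * (1/2:ℝ)^k) atTop (nhds 0) := by
    have h := tendsto_pow_atTop_nhds_zero_of_lt_one (by norm_num : (0:ℝ) ≤ 1/2)
      (by norm_num : (1/2:ℝ) < 1)
    simpa using tendsto_const_nhds.mul h
  have hle0 : |μ X - ∫ ω, (X : Ω → ℝ) ω ∂ν| ≤ 0 := ge_of_tendsto' hlim key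
  have := abs_nonpos_iff.mp hle0
  linarith [this]

set_option synthInstance.maxHeartbeats 400000

noncomputable instance : PartialOrder (BM Ω) :=
  PartialOrder.lift (fun f => (f : Ω → ℝ)) Subtype.coe_injective

section rho
variable {𝒜 : Set (BM Ω)} {S : Submodule ℝ (BM Ω)} {p : S →ₗ[ℝ] ℝ} {ρ : BM Ω → ℝ}

lemma rho_mono (h𝒜mono : ∀ x ∈ 𝒜, ∀ y : BM Ω, y ≤ x → y ∈ 𝒜)
    (hρ : ∀ X : BM Ω, IsGLB {r : ℝ | ∃ Z : S, p Z = r ∧ X - (Z : BM Ω) ∈ 𝒜} (ρ X)) :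
    ∀ X Y : BM Ω, X ≤ Y → ρ X ≤ ρ Y := by
  intro X Y hXY
  refine IsGLB.mono (hρ Y) (hρ X) ?_
  rintro r ⟨Z, hpZ, hmem⟩
  refine ⟨Z, hpZ, h𝒜mono _ hmem _ ?_⟩
  intro ω
  have : (X : Ω → ℝ) ω ≤ (Y : Ω → ℝ) ω := hXY ω
  show (X : Ω → ℝ) ω - ((Z : BM Ω) : Ω → ℝ) ω ≤ (Y : Ω → ℝ) ω - ((Z : BM Ω) : Ω → ℝ) ω
  linarith

lemma rho_cash (hρ : ∀ X : BM Ω, IsGLB {r : ℝ | ∃ Z : S, p Z = r ∧ X - (Z : BM Ω) ∈ 𝒜} (ρ X)) :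
    ∀ (X : BM Ω) (Z : S), ρ (X + (Z : BM Ω)) = ρ X + p Z := by
  intro X Z
  have himg : {r : ℝ | ∃ W : S, p W = r ∧ X + (Z : BM Ω) - (W : BM Ω) ∈ 𝒜}
      = (fun r => r + p Z) '' {r : ℝ | ∃ W : S, p W = r ∧ X - (W : BM Ω) ∈ 𝒜} := by
    ext r
    constructor
    · rintro ⟨W, hpW, hmem⟩
      refine ⟨p W - p Z, ⟨W - Z, map_sub p W Z, ?_⟩, by simp [hpW]⟩
      have : X - ((W - Z : S) : BM Ω) = X + (Z : BM Ω) - (W : BM Ω) := by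
        push_cast
        abel
      rw [this]
      exact hmem
    · rintro ⟨s, ⟨W, hpW, hmem⟩, rfl⟩
      refine ⟨W + Z, by rw [map_add, hpW], ?_⟩
      have : X + (Z : BM Ω) - ((W + Z : S) : BM Ω) = X - (W : BM Ω) := by
        push_cast
        abel
      rw [this]
      exact hmem
  have hglb : IsGLB ((fun r => r + p Z) '' {r : ℝ | ∃ W : S, p W = r ∧ X - (W : BM Ω) ∈ 𝒜})
      (ρ X + p Z) := by
    constructor
    · rintro r ⟨x, hx, rfl⟩
      exact add_le_add_left ((hρ X).1 hx) _
    · intro b hb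
      have : b - p Z ∈ lowerBounds {r : ℝ | ∃ W : S, p W = r ∧ X - (W : BM Ω) ∈ 𝒜} := by
        intro x hx
        have h3 := hb ⟨x, hx, rfl⟩
        simp only at h3
        linarith
      have := (hρ X).2 this
      linarith
  rw [← himg] at hglb
  exact IsGLB.unique (hρ (X + (Z : BM Ω))) hglb

lemma glb_approx {s : Set ℝ} {a : ℝ} (h : IsGLB s a) (ε : ℝ) (hε : 0 < ε) :
    ∃ r ∈ s, r < a + ε := by
  by_contra hc
  push_neg at hc
  have : a + ε ∈ lowerBounds s := fun x hx => hc x hx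
  have := h.2 this
  linarith

lemma rho_convex (h𝒜conv : Convex ℝ 𝒜)
    (hρ : ∀ X : BM Ω, IsGLB {r : ℝ | ∃ Z : S, p Z = r ∧ X - (Z : BM Ω) ∈ 𝒜} (ρ X)) :
    ∀ (a b : ℝ) (X Y : BM Ω), 0 ≤ a → 0 ≤ b → a + b = 1 →
      ρ (a • X + b • Y) ≤ a * ρ X + b * ρ Y := by
  intro a b X Y ha hb hab
  refine le_of_forall_pos_le_add fun ε hε => ?_
  obtain ⟨r, ⟨Z, hpZ, hZ⟩, hr⟩ := glb_approx (hρ X) ε hε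
  obtain ⟨s, ⟨W, hpW, hW⟩, hs⟩ := glb_approx (hρ Y) ε hε
  have hmem : (a • X + b • Y) - ((a • Z + b • W : S) : BM Ω) ∈ 𝒜 := by
    have : (a • X + b • Y) - ((a • Z + b • W : S) : BM Ω)
        = a • (X - (Z : BM Ω)) + b • (Y - (W : BM Ω)) := by
      push_cast
      module
    rw [this]
    exact h𝒜conv hZ hW ha hb hab
  have h1 : ρ (a • X + b • Y) ≤ p (a • Z + b • W) := (hρ _).1 ⟨a • Z + b • W, rfl, hmem⟩
  have h2 : p (a • Z + b • W) = a * r + b * s := by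
    rw [map_add, _root_.map_smul, _root_.map_smul, hpZ, hpW]
    simp [smul_eq_mul]
  rw [h2] at h1
  nlinarith
end rho

section mu
variable {ρ : BM Ω → ℝ}

lemma mu_pos (hmono : ∀ X Y : BM Ω, X ≤ Y → ρ X ≤ ρ Y)
    {μ : BM Ω → ℝ} (hlin : IsLinearMap ℝ μ) {K : ℝ} (hK : ∀ X, μ X ≤ ρ X + K)
    (X : BM Ω) (hX : 0 ≤ X) : 0 ≤ μ X := by
  by_contra hneg
  push_neg at hneg
  have hKρ0 : (0:ℝ) ≤ ρ 0 + K := by have := hK 0; rw [hlin.map_zero] at this; linarith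
  set t := (ρ 0 + K + 1)/(-μ X) with ht
  have htpos : 0 < t := div_pos (by linarith) (by linarith)
  have h2 : t • (-X) ≤ (0 : BM Ω) := by
    intro ω
    show t * (-((X : Ω → ℝ) ω)) ≤ 0
    have := hX ω
    have h0 : (0:ℝ) ≤ (X : Ω → ℝ) ω := this
    nlinarith
  have h3 : ρ (t • (-X)) ≤ ρ 0 := hmono _ _ h2
  have h4 : μ (t • (-X)) = t * (-(μ X)) := by
    rw [hlin.map_smul, hlin.map_neg]
    simp [smul_eq_mul]
  have h5 := hK (t • (-X))
  rw [h4] at h5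
  have h6 : t * (-μ X) = ρ 0 + K + 1 := by
    rw [ht, div_mul_cancel₀ _ (by linarith : -μ X ≠ 0)]
  linarith

lemma mu_cont_down (hmono : ∀ X Y : BM Ω, X ≤ Y → ρ X ≤ ρ Y)
    (hca : ∀ (X : ℕ → BM Ω) (Y : BM Ω), (∀ n m : ℕ, n ≤ m → X m ≤ X n) →
      (∀ ω, Tendsto (fun n => (X n : Ω → ℝ) ω) atTop (nhds ((Y : Ω → ℝ) ω))) →
      Tendsto (fun n => ρ (X n)) atTop (nhds (ρ Y)))
    {μ : BM Ω → ℝ} (hlin : IsLinearMap ℝ μ) {K : ℝ} (hK : ∀ X, μ X ≤ ρ X + K)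
    (Xn : ℕ → BM Ω) (Y : BM Ω) (hdec : ∀ n m : ℕ, n ≤ m → Xn m ≤ Xn n)
    (hptw : ∀ ω, Tendsto (fun n => (Xn n : Ω → ℝ) ω) atTop (nhds ((Y : Ω → ℝ) ω))) :
    Tendsto (fun n => μ (Xn n)) atTop (nhds (μ Y)) := by
  have hKρ0 : (0:ℝ) ≤ ρ 0 + K := by have := hK 0; rw [hlin.map_zero] at this; linarith
  have hYle : ∀ n ω, (Y : Ω → ℝ) ω ≤ (Xn n : Ω → ℝ) ω := by
    intro n ω
    refine le_of_tendsto (hptw ω) ?_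
    filter_upwards [eventually_ge_atTop n] with m hm
    exact hdec n m hm ω
  set Z : ℕ → BM Ω := fun n => Xn n - Y with hZ
  have hZcoe : ∀ n ω, ((Z n : BM Ω) : Ω → ℝ) ω = (Xn n : Ω → ℝ) ω - (Y : Ω → ℝ) ω :=
    fun n ω => rfl
  have hZpos : ∀ n, (0:BM Ω) ≤ Z n := fun n ω => by
    show (0:ℝ) ≤ (Xn n : Ω → ℝ) ω - (Y : Ω → ℝ) ω
    linarith [hYle n ω]
  have hZanti : ∀ n m, n ≤ m → Z m ≤ Z n := fun n m h ω => by
    show (Xn m : Ω → ℝ) ω - (Y : Ω → ℝ) ω ≤ (Xn n : Ω → ℝ) ω - (Y : Ω → ℝ) ω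
    linarith [hdec n m h ω]
  have hμZanti : Antitone fun n => μ (Z n) := by
    intro n m h
    have hnn : (0:BM Ω) ≤ Z n - Z m := fun ω => by
      show (0:ℝ) ≤ ((Z n : BM Ω) : Ω → ℝ) ω - ((Z m : BM Ω) : Ω → ℝ) ω
      have := hZanti n m h ω
      linarith
    have := mu_pos hmono hlin hK _ hnn
    rw [hlin.map_sub] at this
    linarith
  have hμZnonneg : ∀ n, 0 ≤ μ (Z n) := fun n => mu_pos hmono hlin hK _ (hZpos n)
  have hbdd : BddBelow (Set.range fun n => μ (Z n)) :=
    ⟨0, by rintro x ⟨n, rfl⟩; exact hμZnonneg n⟩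
  have hconv : Tendsto (fun n => μ (Z n)) atTop (nhds (⨅ n, μ (Z n))) :=
    tendsto_atTop_ciInf hμZanti hbdd
  set L := ⨅ n, μ (Z n) with hL
  have hL0 : 0 ≤ L := le_ciInf hμZnonneg
  have hbound : ∀ t : ℝ, 0 < t → L ≤ (ρ 0 + K)/t := by
    intro t ht
    have h1 : ∀ n, L ≤ (ρ ((t • Z n)) + K)/t := by
      intro n
      have h2 := hK (t • Z n)
      have h3 : μ (t • Z n) = t * μ (Z n) := by rw [hlin.map_smul]; simp [smul_eq_mul]
      have h4 : L ≤ μ (Z n) := ciInf_le hbdd n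
      rw [h3] at h2
      rw [le_div_iff₀ ht]
      nlinarith
    have h5 : Tendsto (fun n => (ρ (t • Z n) + K)/t) atTop (nhds ((ρ 0 + K)/t)) := by
      have h6 : Tendsto (fun n => ρ (t • Z n)) atTop (nhds (ρ 0)) := by
        apply hca
        · intro n m hnm ω
          show t * (((Z m : BM Ω) : Ω → ℝ) ω) ≤ t * (((Z n : BM Ω) : Ω → ℝ) ω)
          exact mul_le_mul_of_nonneg_left (hZanti n m hnm ω) ht.le
        · intro ω
          have h7 : Tendsto (fun n => ((Z n : BM Ω) : Ω → ℝ) ω) atTop (nhds 0) := by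
            have := (hptw ω).sub_const ((Y : Ω → ℝ) ω)
            simpa [hZcoe] using this
          have h8 := h7.const_mul t
          have e : ((0 : BM Ω) : Ω → ℝ) ω = 0 := rfl
          rw [e]
          simpa using h8
      exact (h6.add_const K).div_const t
    exact ge_of_tendsto' h5 h1
  have hL0' : L ≤ 0 := by
    by_contra hc
    push_neg at hc
    have hb := hbound (2*(ρ 0 + K + 1)/L) (by positivity)
    have e : (ρ 0 + K) / (2*(ρ 0 + K + 1)/L) = L * (ρ 0 + K)/(2*(ρ 0 + K + 1)) := by
      field_simp
    rw [e] at hb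
    have hd : (0:ℝ) < 2*(ρ 0 + K + 1) := by linarith
    rw [le_div_iff₀ hd] at hb
    nlinarith [mul_pos hc (show (0:ℝ) < ρ 0 + K + 2 by linarith)]
  have hLeq : L = 0 := le_antisymm hL0' hL0
  rw [hLeq] at hconv
  have heq : ∀ n, μ (Xn n) = μ (Z n) + μ Y := fun n => by
    rw [hZ]
    simp only
    rw [hlin.map_sub]
    ring
  have h := hconv.add_const (μ Y)
  rw [zero_add] at h
  have e : (fun n => μ (Z n) + μ Y) = fun n => μ (Xn n) := funext fun n => (heq n).symm
  rw [e] at h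
  exact h

lemma mu_cont_up (hmono : ∀ X Y : BM Ω, X ≤ Y → ρ X ≤ ρ Y)
    (hca : ∀ (X : ℕ → BM Ω) (Y : BM Ω), (∀ n m : ℕ, n ≤ m → X m ≤ X n) →
      (∀ ω, Tendsto (fun n => (X n : Ω → ℝ) ω) atTop (nhds ((Y : Ω → ℝ) ω))) →
      Tendsto (fun n => ρ (X n)) atTop (nhds (ρ Y)))
    {μ : BM Ω → ℝ} (hlin : IsLinearMap ℝ μ) {K : ℝ} (hK : ∀ X, μ X ≤ ρ X + K)
    (Xn : ℕ → BM Ω) (Y : BM Ω) (hinc : ∀ n m : ℕ, n ≤ m → Xn n ≤ Xn m)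
    (hptw : ∀ ω, Tendsto (fun n => (Xn n : Ω → ℝ) ω) atTop (nhds ((Y : Ω → ℝ) ω))) :
    Tendsto (fun n => μ (Xn n)) atTop (nhds (μ Y)) := by
  have hdn := mu_cont_down hmono hca hlin hK (fun n => -Xn n) (-Y)
    (fun n m h ω => by
      show -((Xn m : Ω → ℝ) ω) ≤ -((Xn n : Ω → ℝ) ω)
      have := hinc n m h ω
      linarith)
    (fun ω => by
      have := (hptw ω).neg
      exact this)
  have e : ∀ n, μ (-Xn n) = -μ (Xn n) := fun n => hlin.map_neg _
  have eY : μ (-Y) = -μ Y := hlin.map_neg _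
  rw [eY] at hdn
  have e2 : (fun n => μ (-Xn n)) = fun n => -μ (Xn n) := funext e
  rw [e2] at hdn
  have := hdn.neg
  simpa using this
end mu


section helpers
variable {Ω : Type*} [MeasurableSpace Ω]

lemma indBM_empty : indBM (∅ : Set Ω) MeasurableSet.empty = 0 := by
  apply Subtype.ext
  show (∅ : Set Ω).indicator _ = _
  simp
  rfl

lemma indBM_le_indBM {A B : Set Ω} (hA : MeasurableSet A) (hB : MeasurableSet B) (h : A ⊆ B) :
    indBM A hA ≤ indBM B hB := by
  intro ω
  simp only [indBM_apply]
  exact Set.indicator_le_indicator_of_subset h (fun x => by norm_num) ω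

lemma indBM_le_add_of_subset {A B C : Set Ω} (hA : MeasurableSet A) (hB : MeasurableSet B)
    (hC : MeasurableSet C) (h : A ⊆ B ∪ C) :
    indBM A hA ≤ indBM B hB + indBM C hC := by
  intro ω
  show A.indicator (fun _ => (1:ℝ)) ω ≤ B.indicator (fun _ => (1:ℝ)) ω + C.indicator (fun _ => (1:ℝ)) ω
  by_cases hω : ω ∈ A
  · rcases h hω with hb | hc
    · have h1 : B.indicator (fun _ => (1:ℝ)) ω = 1 := Set.indicator_of_mem hb _
      have h2 : (0:ℝ) ≤ C.indicator (fun _ => (1:ℝ)) ω := Set.indicator_nonneg (by norm_num) ω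
      rw [Set.indicator_of_mem hω]
      linarith
    · have h1 : C.indicator (fun _ => (1:ℝ)) ω = 1 := Set.indicator_of_mem hc _
      have h2 : (0:ℝ) ≤ B.indicator (fun _ => (1:ℝ)) ω := Set.indicator_nonneg (by norm_num) ω
      rw [Set.indicator_of_mem hω]
      linarith
  · rw [Set.indicator_of_notMem hω]
    have h2 : (0:ℝ) ≤ C.indicator (fun _ => (1:ℝ)) ω := Set.indicator_nonneg (by norm_num) ω
    have h1 : (0:ℝ) ≤ B.indicator (fun _ => (1:ℝ)) ω := Set.indicator_nonneg (by norm_num) ω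
    linarith

variable {ρ : BM Ω → ℝ}

lemma mu_mono (hmono : ∀ X Y : BM Ω, X ≤ Y → ρ X ≤ ρ Y)
    {μ : BM Ω → ℝ} (hlin : IsLinearMap ℝ μ) {K : ℝ} (hK : ∀ X, μ X ≤ ρ X + K)
    (X Y : BM Ω) (h : X ≤ Y) : μ X ≤ μ Y := by
  have hnn : (0:BM Ω) ≤ Y - X := fun ω => by
    show (0:ℝ) ≤ (Y : Ω → ℝ) ω - (X : Ω → ℝ) ω
    linarith [h ω]
  have := mu_pos hmono hlin hK _ hnn
  rw [hlin.map_sub] at this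
  linarith

lemma mu_null_iUnion (hmono : ∀ X Y : BM Ω, X ≤ Y → ρ X ≤ ρ Y)
    (hca : ∀ (X : ℕ → BM Ω) (Y : BM Ω), (∀ n m : ℕ, n ≤ m → X m ≤ X n) →
      (∀ ω, Tendsto (fun n => (X n : Ω → ℝ) ω) atTop (nhds ((Y : Ω → ℝ) ω))) →
      Tendsto (fun n => ρ (X n)) atTop (nhds (ρ Y)))
    {μ : BM Ω → ℝ} (hlin : IsLinearMap ℝ μ) {K : ℝ} (hK : ∀ X, μ X ≤ ρ X + K)
    (A : ℕ → Set Ω) (hA : ∀ k, MeasurableSet (A k))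
    (h0 : ∀ k, μ (indBM (A k) (hA k)) = 0) :
    μ (indBM (⋃ k, A k) (MeasurableSet.iUnion hA)) = 0 := by
  classical
  set P : ℕ → Set Ω := fun n => ⋃ i ∈ Finset.range n, A i with hP
  have hPmeas : ∀ n, MeasurableSet (P n) :=
    fun n => (Finset.range n).measurableSet_biUnion (fun i _ => hA i)
  have hPn0 : ∀ n, μ (indBM (P n) (hPmeas n)) = 0 := by
    intro n
    induction n with
    | zero =>
      have he : P 0 = ∅ := by simp [hP]
      have : indBM (P 0) (hPmeas 0) = 0 := by
        apply Subtype.ext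
        show (P 0).indicator _ = _
        rw [he]
        simp
        rfl
      rw [this, hlin.map_zero]
    | succ n ih =>
      have hsub : P (n+1) ⊆ P n ∪ A n := by
        rw [hP]
        simp only [Finset.range_add_one, Finset.set_biUnion_insert]
        exact Set.union_subset (Set.subset_union_right) (fun x hx => Or.inl hx)
      have h1 := indBM_le_add_of_subset (hPmeas (n+1)) (hPmeas n) (hA n) hsub
      have h2 := mu_mono hmono hlin hK _ _ h1
      rw [hlin.map_add, ih, h0 n] at h2
      have h3 := mu_pos hmono hlin hK _ (indBM_nonneg (P (n+1)) (hPmeas (n+1)))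
      linarith
  have hinc : ∀ n m : ℕ, n ≤ m → indBM (P n) (hPmeas n) ≤ indBM (P m) (hPmeas m) :=
    fun n m h => indBM_le_indBM _ _
      (Set.biUnion_subset_biUnion_left (Finset.range_subset_range.2 h))
  have hptw : ∀ ω, Tendsto (fun n => ((indBM (P n) (hPmeas n) : BM Ω) : Ω → ℝ) ω) atTop
      (nhds (((indBM (⋃ k, A k) (MeasurableSet.iUnion hA) : BM Ω) : Ω → ℝ) ω)) := by
    intro ω
    simp only [indBM_apply]
    by_cases hω : ω ∈ ⋃ k, A k
    · obtain ⟨i0, hi0⟩ := mem_iUnion.1 hω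
      rw [Set.indicator_of_mem hω]
      apply tendsto_atTop_of_eventually_const (i₀ := i0 + 1)
      intro n hn
      have : ω ∈ P n := Set.mem_biUnion (Finset.mem_range.2 (by omega)) hi0
      simp [Set.indicator_of_mem this]
    · rw [Set.indicator_of_notMem hω]
      have : ∀ n, (P n).indicator (fun _ => (1:ℝ)) ω = 0 := by
        intro n
        apply Set.indicator_of_notMem
        intro hc
        obtain ⟨i, hi, hxi⟩ := by simpa [hP] using hc
        exact hω (mem_iUnion.2 ⟨i, hxi⟩)
      simp only [this]
      exact tendsto_const_nhds
  have hlim := mu_cont_up hmono hca hlin hK _ _ hinc hptw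
  have : (fun n => μ (indBM (P n) (hPmeas n))) = fun _ => 0 := funext hPn0
  rw [this] at hlim
  exact (tendsto_nhds_unique tendsto_const_nhds hlim).symm
end helpers

theorem stmt6 (𝒜 : Set (BM Ω)) (S : Submodule ℝ (BM Ω)) [FiniteDimensional ℝ S]
    (p : S →ₗ[ℝ] ℝ)
    (h𝒜ne : 𝒜.Nonempty) (h𝒜proper : 𝒜 ≠ Set.univ) (h𝒜conv : Convex ℝ 𝒜)
    (h𝒜mono : ∀ x ∈ 𝒜, ∀ y : BM Ω, y ≤ x → y ∈ 𝒜)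
    (hSproper : S ≠ ⊤) (hU : ∃ U : S, 0 < (U : BM Ω))
    (hppos : ∀ Z : S, 0 ≤ (Z : BM Ω) → 0 ≤ p Z)
    (hpstrict : ∀ Z : S, 0 < (Z : BM Ω) → 0 < p Z)
    (hregime : ∀ X : BM Ω, BddAbove {r : ℝ | ∃ Z : S, p Z = r ∧ X + (Z : BM Ω) ∈ 𝒜})
    -- ρ is the associated (finite) risk measure
    (ρ : BM Ω → ℝ)
    (hρ : ∀ X : BM Ω, IsGLB {r : ℝ | ∃ Z : S, p Z = r ∧ X - (Z : BM Ω) ∈ 𝒜} (ρ X))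
    -- ρ is continuous from above
    (hca : ∀ (X : ℕ → BM Ω) (Y : BM Ω),
      (∀ n m : ℕ, n ≤ m → X m ≤ X n) →
      (∀ ω, Filter.Tendsto (fun n => (X n : Ω → ℝ) ω) Filter.atTop (nhds ((Y : Ω → ℝ) ω))) →
      Filter.Tendsto (fun n => ρ (X n)) Filter.atTop (nhds (ρ Y))) :
    ∃ P : Measure Ω, IsProbabilityMeasure P ∧
      -- ρ*(c ⬝ P) < ∞ for a suitable c > 0
      (∃ c : ℝ, 0 < c ∧
        rstar ρ (fun X => c * ∫ ω, (X : Ω → ℝ) ω ∂P) ≠ ⊤) ∧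
      -- P ≈ dom(ρ*)
      (∀ (A : Set Ω) (hA : MeasurableSet A),
        P A = 0 ↔ ∀ μ ∈ domStar ρ, μ (indBM A hA) = 0) ∧
      -- dom(ρ*) ⊆ (ca_P)₊ : every element of the domain is positive and is
      -- represented by a finite measure absolutely continuous w.r.t. P
      (∀ μ ∈ domStar ρ,
        (∀ X : BM Ω, 0 ≤ X → 0 ≤ μ X) ∧
        ∃ ν : Measure Ω, IsFiniteMeasure ν ∧ ν ≪ P ∧
          ∀ X : BM Ω, μ X = ∫ ω, (X : Ω → ℝ) ω ∂ν) := by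
  classical
  obtain ⟨U, hUpos⟩ := hU
  have hmonoρ := rho_mono h𝒜mono hρ
  have hcash := rho_cash hρ
  have hconvρ := rho_convex h𝒜conv hρ
  set one : BM Ω := indBM Set.univ MeasurableSet.univ with hone
  -- membership in Dc c implies positivity
  have hposD : ∀ (c : ℝ) (μ : BM Ω → ℝ), IsLinearMap ℝ μ → (∀ X, μ X ≤ ρ X + c) →
      ∀ X : BM Ω, 0 ≤ X → 0 ≤ μ X := fun c μ hlin hK => mu_pos hmonoρ hlin hK
  -- a positive linear functional is bounded by its value at one
  have hMemBa : ∀ (μ : BM Ω → ℝ), IsLinearMap ℝ μ → (∀ X : BM Ω, 0 ≤ X → 0 ≤ μ X) →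
      ∀ (X : BM Ω) (C : ℝ), (∀ ω, |(X : Ω → ℝ) ω| ≤ C) → |μ X| ≤ μ one * C := by
    intro μ hlin hp X C hC
    have h1 : X ≤ C • one := by
      intro ω
      show (X : Ω → ℝ) ω ≤ C * ((one : BM Ω) : Ω → ℝ) ω
      have : ((one : BM Ω) : Ω → ℝ) ω = 1 := by
        rw [hone, indBM_apply]
        simp
      rw [this, mul_one]
      exact le_of_abs_le (hC ω)
    have h2 : -X ≤ C • one := by
      intro ω
      show -((X : Ω → ℝ) ω) ≤ C * ((one : BM Ω) : Ω → ℝ) ω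
      have : ((one : BM Ω) : Ω → ℝ) ω = 1 := by
        rw [hone, indBM_apply]
        simp
      rw [this, mul_one]
      exact neg_le.mpr (abs_le.1 (hC ω)).1
    have h3 : μ X ≤ μ (C • one) := by
      have hnn : (0:BM Ω) ≤ C • one - X := fun ω => by
        show (0:ℝ) ≤ ((C • one : BM Ω) : Ω → ℝ) ω - (X : Ω → ℝ) ω
        have := h1 ω
        linarith
      have := hp _ hnn
      rw [hlin.map_sub] at this
      linarith
    have h4 : -μ X ≤ μ (C • one) := by
      have hnn : (0:BM Ω) ≤ C • one - (-X) := fun ω => by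
        show (0:ℝ) ≤ ((C • one : BM Ω) : Ω → ℝ) ω - ((-X : BM Ω) : Ω → ℝ) ω
        have := h2 ω
        have e : ((-X : BM Ω) : Ω → ℝ) ω = -((X : Ω → ℝ) ω) := rfl
        rw [e]
        linarith
      have := hp _ hnn
      rw [hlin.map_sub, hlin.map_neg] at this
      linarith
    have h5 : μ (C • one) = C * μ one := by rw [hlin.map_smul]; simp [smul_eq_mul]
    rw [h5] at h3 h4
    rw [abs_le]
    constructor <;> nlinarith
  -- extraction of a real bound from membership in domStar
  have domK : ∀ μ' ∈ domStar ρ, ∃ K : ℝ, 0 ≤ K ∧ ∀ X, μ' X ≤ ρ X + K := by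
    rintro μ' ⟨hba, hne⟩
    have hle : ∀ X : BM Ω, ((μ' X - ρ X : ℝ) : EReal) ≤ rstar ρ μ' :=
      fun X => le_iSup (fun X => ((μ' X - ρ X : ℝ) : EReal)) X
    have hbot : rstar ρ μ' ≠ ⊥ := by
      intro hb
      have := hle 0
      rw [hb, le_bot_iff] at this
      exact (EReal.coe_ne_bot _) this
    refine ⟨max (rstar ρ μ').toReal 0, le_max_right _ _, fun X => ?_⟩
    have h1 := hle X
    rw [← EReal.coe_toReal hne hbot] at h1
    have h2 := EReal.coe_le_coe_iff.1 h1
    have h3 : μ' X - ρ X ≤ max (rstar ρ μ').toReal 0 := le_trans h2 (le_max_left _ _)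
    linarith
  -- subgradient: an element of the dual domain
  obtain ⟨ℓ, hℓ⟩ := exists_linear_le_of_convexfn ρ (fun a b x y ha hb hab => hconvρ a b x y ha hb hab)
  set K0 : ℝ := max (-ρ 0) 0 with hK0
  have hK00 : 0 ≤ K0 := le_max_right _ _
  have hℓlin : IsLinearMap ℝ (fun X => ℓ X) := ⟨fun x y => ℓ.map_add x y, fun c x => ℓ.map_smul c x⟩
  have hℓK : ∀ X, ℓ X ≤ ρ X + K0 := fun X => by
    have h1 := hℓ X
    have h2 : -ρ 0 ≤ K0 := le_max_left _ _
    linarith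
  -- the sets Dc
  set Dc : ℝ → Set (BM Ω → ℝ) := fun c => {μ | IsLinearMap ℝ μ ∧ ∀ X, μ X ≤ ρ X + c} with hDc
  -- w
  set w : (BM Ω → ℝ) → Set Ω → ℝ := fun μ A => if hA : MeasurableSet A then μ (indBM A hA) else 0
    with hw
  have hwA : ∀ (μ : BM Ω → ℝ) (A : Set Ω) (hA : MeasurableSet A), w μ A = μ (indBM A hA) :=
    fun μ A hA => dif_pos hA
  -- exhaustion for each level set
  have hexh : ∀ j : ℕ, ∃ f : ℕ → (BM Ω → ℝ), (∀ n, f n ∈ Dc (K0 + j)) ∧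
      ∀ A : Set Ω, MeasurableSet A → (∀ n, w (f n) A = 0) → ∀ μ' ∈ Dc (K0 + j), w μ' A = 0 := by
    intro j
    set c : ℝ := K0 + j with hc
    have hc0 : 0 ≤ c := by positivity
    apply exhaustion (Dc c) w
    · exact ⟨fun X => ℓ X, hℓlin, fun X => by have := hℓK X; have : (0:ℝ) ≤ j := Nat.cast_nonneg j; linarith [hℓK X]⟩
    · rintro μ ⟨hlin, hK⟩ A hA
      rw [hwA _ _ hA]
      exact hposD c μ hlin hK _ (indBM_nonneg _ _)
    · refine ⟨ρ one + c, ?_⟩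
      rintro μ ⟨hlin, hK⟩ A hA
      rw [hwA _ _ hA]
      have h1 : indBM A hA ≤ one := indBM_le_indBM hA MeasurableSet.univ (subset_univ A)
      have h2 := mu_mono hmonoρ hlin hK _ _ h1
      have h3 := hK one
      linarith
    · rintro μ ⟨hlin, hK⟩
      rw [hwA _ _ MeasurableSet.empty, indBM_empty, hlin.map_zero]
    · rintro μ ⟨hlin, hK⟩ A B C' hA hB hC' hsub
      rw [hwA _ _ hA, hwA _ _ hB, hwA _ _ hC']
      have h1 := indBM_le_add_of_subset hA hB hC' hsub
      have h2 := mu_mono hmonoρ hlin hK _ _ h1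
      rw [hlin.map_add] at h2
      exact h2
    · rintro μ ⟨hlin, hK⟩ A hA h0
      have := mu_null_iUnion hmonoρ hca hlin hK A hA (fun k => by
        have := h0 k
        rw [hwA _ _ (hA k)] at this
        exact this)
      rw [hwA _ _ (MeasurableSet.iUnion hA)]
      exact this
    · -- uniform continuity from above
      intro B hBmeas hBanti hBint ε hε
      have hρ0c : (0:ℝ) ≤ ρ 0 + c := by
        have := hℓK 0
        have h0 : ℓ (0 : BM Ω) = 0 := ℓ.map_zero
        have : (0:ℝ) ≤ j := Nat.cast_nonneg j
        have h2 := hℓK (0 : BM Ω)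
        rw [h0] at h2
        linarith
      set t : ℝ := max 1 ((ρ 0 + 1 + c)/ε) with ht
      have htpos : (0:ℝ) < t := lt_of_lt_of_le one_pos (le_max_left _ _)
      have htb : ρ 0 + 1 + c ≤ ε * t := by
        have h1 : (ρ 0 + 1 + c)/ε ≤ t := le_max_right _ _
        calc ρ 0 + 1 + c = ε * ((ρ 0 + 1 + c)/ε) := by field_simp
          _ ≤ ε * t := mul_le_mul_of_nonneg_left h1 hε.le
      -- ρ (t • ind (B n)) → ρ 0
      have h6 : Tendsto (fun n => ρ (t • indBM (B n) (hBmeas n))) atTop (nhds (ρ 0)) := by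
        apply hca
        · intro n m hnm ω
          show t * (((indBM (B m) (hBmeas m) : BM Ω) : Ω → ℝ) ω)
            ≤ t * (((indBM (B n) (hBmeas n) : BM Ω) : Ω → ℝ) ω)
          exact mul_le_mul_of_nonneg_left
            (indBM_le_indBM (hBmeas m) (hBmeas n) (hBanti n m hnm) ω) htpos.le
        · intro ω
          have hωn : ∃ N, ω ∉ B N := by
            by_contra hcon
            push_neg at hcon
            have : ω ∈ ⋂ n, B n := mem_iInter.2 hcon
            rw [hBint] at this
            exact this
          obtain ⟨N, hN⟩ := hωn
          have e : ((0 : BM Ω) : Ω → ℝ) ω = 0 := rfl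
          rw [e]
          apply tendsto_atTop_of_eventually_const (i₀ := N)
          intro n hn
          have hωn' : ω ∉ B n := fun hc => hN (hBanti N n hn hc)
          show t * ((B n).indicator (fun _ => (1:ℝ)) ω) = 0
          rw [Set.indicator_of_notMem hωn']
          ring
      have h7 : ∀ᶠ n in atTop, ρ (t • indBM (B n) (hBmeas n)) < ρ 0 + 1 :=
        h6.eventually_lt_const (lt_add_one (ρ 0))
      obtain ⟨N, hN⟩ := eventually_atTop.1 h7
      refine ⟨N, fun n hn μ hμ => ?_⟩
      obtain ⟨hlin, hK⟩ := hμ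
      rw [hwA _ _ (hBmeas n)]
      have h8 := hK (t • indBM (B n) (hBmeas n))
      have h9 : μ (t • indBM (B n) (hBmeas n)) = t * μ (indBM (B n) (hBmeas n)) := by
        rw [hlin.map_smul]
        simp [smul_eq_mul]
      rw [h9] at h8
      have h10 := (hN n hn).le
      rw [mul_comm ε t] at htb
      -- t * μ(ind) ≤ ρ 0 + 1 + c ≤ t * ε
      have h11 : t * μ (indBM (B n) (hBmeas n)) ≤ t * ε := by
        calc t * μ (indBM (B n) (hBmeas n)) ≤ ρ (t • indBM (B n) (hBmeas n)) + c := h8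
          _ ≤ ρ 0 + 1 + c := by linarith
          _ ≤ t * ε := htb
      exact le_of_mul_le_mul_left h11 htpos
  choose fam hfamD hfamNull using hexh
  set e : ℕ ≃ ℕ × ℕ := (Denumerable.eqv (ℕ × ℕ)).symm with he
  set μk : ℕ → (BM Ω → ℝ) := fun k => fam (e k).1 (e k).2 with hμk
  have hμkD : ∀ k, μk k ∈ Dc (K0 + (e k).1) := fun k => hfamD (e k).1 (e k).2
  have hμklin : ∀ k, IsLinearMap ℝ (μk k) := fun k => (hμkD k).1
  have hμkK : ∀ k, ∀ X, μk k X ≤ ρ X + (K0 + (e k).1) := fun k => (hμkD k).2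
  have hμkpos : ∀ k, ∀ X : BM Ω, 0 ≤ X → 0 ≤ μk k X :=
    fun k => hposD _ _ (hμklin k) (hμkK k)
  set Mk : ℕ → ℝ := fun k => μk k one with hMk
  have hMk0 : ∀ k, 0 ≤ Mk k := fun k => hμkpos k one (indBM_nonneg _ _)
  set Kk : ℕ → ℝ := fun k => K0 + (e k).1 with hKk
  have hKk0 : ∀ k, 0 ≤ Kk k := fun k => by
    have : (0:ℝ) ≤ ((e k).1 : ℝ) := Nat.cast_nonneg _
    rw [hKk]
    dsimp only
    linarith
  have hden : ∀ k, (0:ℝ) < 1 + Mk k + Kk k := fun k => by linarith [hMk0 k, hKk0 k]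
  set a : ℕ → ℝ := fun k => (1/2:ℝ)^k / (1 + Mk k + Kk k) with haa
  have ha0 : ∀ k, 0 < a k := fun k => div_pos (by positivity) (hden k)
  have ha_le : ∀ k, a k ≤ (1/2:ℝ)^k := fun k => by
    rw [haa]
    dsimp only
    rw [div_le_iff₀ (hden k)]
    nlinarith [hMk0 k, hKk0 k, pow_pos (by norm_num : (0:ℝ) < 1/2) k,
      mul_nonneg (pow_nonneg (by norm_num : (0:ℝ) ≤ 1/2) k) (hMk0 k),
      mul_nonneg (pow_nonneg (by norm_num : (0:ℝ) ≤ 1/2) k) (hKk0 k)]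
  have haM : ∀ k, a k * Mk k ≤ (1/2:ℝ)^k := fun k => by
    rw [haa]
    dsimp only
    rw [div_mul_eq_mul_div, div_le_iff₀ (hden k)]
    nlinarith [hMk0 k, hKk0 k, pow_pos (by norm_num : (0:ℝ) < 1/2) k,
      mul_nonneg (pow_nonneg (by norm_num : (0:ℝ) ≤ 1/2) k) (hMk0 k),
      mul_nonneg (pow_nonneg (by norm_num : (0:ℝ) ≤ 1/2) k) (hKk0 k)]
  have haK : ∀ k, a k * Kk k ≤ (1/2:ℝ)^k := fun k => by
    rw [haa]
    dsimp only
    rw [div_mul_eq_mul_div, div_le_iff₀ (hden k)]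
    nlinarith [hMk0 k, hKk0 k, pow_pos (by norm_num : (0:ℝ) < 1/2) k,
      mul_nonneg (pow_nonneg (by norm_num : (0:ℝ) ≤ 1/2) k) (hMk0 k),
      mul_nonneg (pow_nonneg (by norm_num : (0:ℝ) ≤ 1/2) k) (hKk0 k)]
  have hgeom : Summable fun k : ℕ => (1/2:ℝ)^k :=
    summable_geometric_of_lt_one (by norm_num) (by norm_num)
  have hasumm : Summable a := Summable.of_nonneg_of_le (fun k => (ha0 k).le) ha_le hgeom
  set s : ℝ := ∑' k, a k with hss
  have hs0 : 0 < s := lt_of_lt_of_le (ha0 0) (Summable.le_tsum hasumm 0 fun j _ => (ha0 j).le)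
  set b : ℕ → ℝ := fun k => a k / s with hbb
  have hb0 : ∀ k, 0 < b k := fun k => div_pos (ha0 k) hs0
  have hbsumm : Summable b := hasumm.div_const s
  have hbsum1 : ∑' k, b k = 1 := by
    rw [hbb]
    rw [tsum_div_const]
    rw [← hss]
    field_simp
  have hbM : ∀ k, b k * Mk k ≤ (1/2:ℝ)^k / s := fun k => by
    rw [hbb]
    dsimp only
    rw [div_mul_eq_mul_div, div_le_div_iff₀ hs0 hs0]
    nlinarith [haM k, hs0]
  have hbK : ∀ k, b k * Kk k ≤ (1/2:ℝ)^k / s := fun k => by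
    rw [hbb]
    dsimp only
    rw [div_mul_eq_mul_div, div_le_div_iff₀ hs0 hs0]
    nlinarith [haK k, hs0]
  have hgeos : Summable fun k : ℕ => (1/2:ℝ)^k / s := hgeom.div_const s
  -- summability of the mixture
  have hsummX : ∀ X : BM Ω, Summable fun k => b k * μk k X := by
    intro X
    obtain ⟨C, hC0, hC⟩ := bm_exists_bound X
    apply Summable.of_norm_bounded (hgeos.mul_right C)
    intro k
    rw [Real.norm_eq_abs, abs_mul, abs_of_pos (hb0 k)]
    have h1 : |μk k X| ≤ Mk k * C := hMemBa (μk k) (hμklin k) (hμkpos k) X C hC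
    calc b k * |μk k X| ≤ b k * (Mk k * C) :=
          mul_le_mul_of_nonneg_left h1 (hb0 k).le
      _ = (b k * Mk k) * C := by ring
      _ ≤ ((1/2:ℝ)^k / s) * C := mul_le_mul_of_nonneg_right (hbM k) hC0
  set μP : BM Ω → ℝ := fun X => ∑' k, b k * μk k X with hμP
  have hμPlin : IsLinearMap ℝ μP := by
    constructor
    · intro X Y
      rw [hμP]
      dsimp only
      have e1 : (fun k => b k * μk k (X + Y)) = fun k => b k * μk k X + b k * μk k Y := by
        funext k
        rw [(hμklin k).map_add]
        ring
      rw [e1, Summable.tsum_add (hsummX X) (hsummX Y)]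
    · intro c X
      rw [hμP]
      dsimp only
      have e1 : (fun k => b k * μk k (c • X)) = fun k => c * (b k * μk k X) := by
        funext k
        rw [(hμklin k).map_smul]
        simp [smul_eq_mul]
        ring
      rw [e1, tsum_mul_left]
      simp [smul_eq_mul]
  have hμPK : ∀ X, μP X ≤ ρ X + 2/s := by
    intro X
    have hsummρ : Summable fun k => b k * ρ X := hbsumm.mul_right (ρ X)
    have hsummKk : Summable fun k => b k * Kk k :=
      Summable.of_nonneg_of_le (fun k => mul_nonneg (hb0 k).le (hKk0 k)) hbK hgeos
    have h1 : ∀ k, b k * μk k X - b k * ρ X ≤ b k * Kk k := by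
      intro k
      have := hμkK k X
      have h2 : μk k X - ρ X ≤ Kk k := by rw [hKk]; dsimp only; linarith
      nlinarith [hb0 k]
    have h3 : ∑' k, (b k * μk k X - b k * ρ X) ≤ ∑' k, b k * Kk k :=
      Summable.tsum_le_tsum h1 ((hsummX X).sub hsummρ) hsummKk
    rw [Summable.tsum_sub (hsummX X) hsummρ, tsum_mul_right, hbsum1, one_mul] at h3
    have h4 : ∑' k, b k * Kk k ≤ ∑' k, (1/2:ℝ)^k / s := Summable.tsum_le_tsum hbK hsummKk hgeos
    have h5 : ∑' k : ℕ, (1/2:ℝ)^k / s = 2 / s := by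
      rw [tsum_div_const, tsum_geometric_two]
    rw [h5] at h4
    have : μP X - ρ X ≤ 2/s := le_trans h3 h4
    linarith
  have hμPpos : ∀ X : BM Ω, 0 ≤ X → 0 ≤ μP X := mu_pos hmonoρ hμPlin hμPK
  have hμPBa : ∀ (X : BM Ω) (C : ℝ), (∀ ω, |(X : Ω → ℝ) ω| ≤ C) → |μP X| ≤ μP one * C :=
    hMemBa μP hμPlin hμPpos
  have hμPne : rstar ρ μP ≠ ⊤ := by
    have hle : rstar ρ μP ≤ ((2/s : ℝ) : EReal) := by
      apply iSup_le
      intro X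
      have := hμPK X
      exact_mod_cast EReal.coe_le_coe_iff.2 (by linarith : μP X - ρ X ≤ 2/s)
    exact ne_top_of_le_ne_top (EReal.coe_ne_top _) hle
  have hμPdom : μP ∈ domStar ρ := ⟨⟨hμPlin, μP one, hμPBa⟩, hμPne⟩
  -- μP agrees with p on U, hence has positive mass
  have key : ∀ t : ℝ, t * (μP (U : BM Ω) - p U) ≤ ρ 0 + 2/s := by
    intro t
    have h1 := hμPK ((t • U : S) : BM Ω)
    have h2 := hcash 0 (t • U)
    rw [zero_add] at h2
    rw [h2] at h1
    have hcs : ((t • U : S) : BM Ω) = t • ((U : S) : BM Ω) := Submodule.coe_smul t U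
    have h3 : μP ((t • U : S) : BM Ω) = t * μP (U : BM Ω) := by
      rw [hcs, hμPlin.map_smul]
      simp [smul_eq_mul]
    have h4 : p (t • U) = t * p U := by
      rw [_root_.map_smul]
      simp [smul_eq_mul]
    rw [h3, h4] at h1
    nlinarith
  have hμPU : μP (U : BM Ω) = p U := by
    by_contra hd
    have hd' : μP (U : BM Ω) - p U ≠ 0 := fun h => hd (by linarith [sub_eq_zero.1 h])
    have := key ((ρ 0 + 2/s + 1)/(μP (U : BM Ω) - p U))
    rw [div_mul_cancel₀ _ hd'] at this
    linarith
  have hpU : 0 < p U := hpstrict U hUpos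
  obtain ⟨CU, hCU0, hCU⟩ := bm_exists_bound (U : BM Ω)
  have hUbd : |μP (U : BM Ω)| ≤ μP one * CU := hμPBa _ CU hCU
  have hcpos : 0 < μP one := by
    by_contra hcon
    push_neg at hcon
    have h1 : μP one * CU ≤ 0 := mul_nonpos_of_nonpos_of_nonneg hcon hCU0
    rw [hμPU] at hUbd
    have := le_of_abs_le hUbd
    linarith
  set c : ℝ := μP one with hcdef
  -- the reference measure
  obtain ⟨νP, hνPfin, hνPapply, hνPint⟩ := exists_repr_measure μP hμPlin hμPpos
    ⟨μP one, hμPpos one (indBM_nonneg _ _), hμPBa⟩ (mu_cont_up hmonoρ hca hμPlin hμPK)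
  haveI := hνPfin
  have hνPone : νP Set.univ = ENNReal.ofReal c := by
    rw [hνPapply Set.univ MeasurableSet.univ]
  set P : Measure Ω := (ENNReal.ofReal c)⁻¹ • νP with hPdef
  have hcne0 : ENNReal.ofReal c ≠ 0 :=
    fun h => absurd (ENNReal.ofReal_eq_zero.1 h) (not_le.2 hcpos)
  have hcneT : ENNReal.ofReal c ≠ ⊤ := ENNReal.ofReal_ne_top
  have hprob : IsProbabilityMeasure P := by
    constructor
    rw [hPdef, Measure.smul_apply, hνPone, smul_eq_mul, ENNReal.inv_mul_cancel hcne0 hcneT]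
  have hintP : ∀ X : BM Ω, ∫ ω, (X : Ω → ℝ) ω ∂P = c⁻¹ * μP X := by
    intro X
    rw [hPdef, integral_smul_measure, ← hνPint X]
    rw [ENNReal.toReal_inv, ENNReal.toReal_ofReal hcpos.le, smul_eq_mul]
  -- the characterization of P-null sets
  have hAiff : ∀ (A : Set Ω) (hA : MeasurableSet A),
      (P A = 0 ↔ ∀ μ' ∈ domStar ρ, μ' (indBM A hA) = 0) := by
    intro A hA
    have hPA : P A = (ENNReal.ofReal c)⁻¹ * νP A := by
      rw [hPdef, Measure.smul_apply, smul_eq_mul]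
    have hP0 : P A = 0 ↔ μP (indBM A hA) = 0 := by
      rw [hPA, hνPapply A hA]
      constructor
      · intro h
        rcases mul_eq_zero.1 h with h | h
        · rw [ENNReal.inv_eq_zero] at h
          exact absurd h hcneT
        · have h2 := ENNReal.ofReal_eq_zero.1 h
          exact le_antisymm h2 (hμPpos _ (indBM_nonneg _ _))
      · intro h
        rw [h]
        simp
    rw [hP0]
    constructor
    · intro h0 μ' hμ'
      have hterm : ∀ i : ℕ, 0 ≤ b i * μk i (indBM A hA) :=
        fun i => mul_nonneg (hb0 i).le (hμkpos i _ (indBM_nonneg _ _))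
      have h0' : ∑' i, b i * μk i (indBM A hA) = 0 := h0
      have hk0 : ∀ k, μk k (indBM A hA) = 0 := by
        intro k
        have hle := Summable.le_tsum (hsummX (indBM A hA)) k (fun j _ => hterm j)
        rw [h0'] at hle
        have heq := le_antisymm hle (hterm k)
        rcases mul_eq_zero.1 heq with h | h
        · exact absurd h (ne_of_gt (hb0 k))
        · exact h
      obtain ⟨K, hKpos, hK⟩ := domK μ' hμ'
      set j : ℕ := ⌈K⌉₊ with hj
      have hμ'D : μ' ∈ Dc (K0 + j) := by
        refine ⟨hμ'.1.1, fun X => ?_⟩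
        have h1 : K ≤ (j:ℝ) := Nat.le_ceil K
        have h2 := hK X
        linarith
      have hnulls : ∀ n, w (fam j n) A = 0 := by
        intro n
        rw [hwA _ _ hA]
        have hk' : fam (e (e.symm (j, n))).1 (e (e.symm (j, n))).2 (indBM A hA) = 0 :=
          hk0 (e.symm (j, n))
        rw [Equiv.apply_symm_apply] at hk'
        exact hk'
      have hres := hfamNull j A hA hnulls μ' hμ'D
      rw [hwA _ _ hA] at hres
      exact hres
    · intro hall
      exact hall μP hμPdom
  refine ⟨P, hprob, ⟨c, hcpos, ?_⟩, hAiff, ?_⟩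
  · have e1 : (fun X : BM Ω => c * ∫ ω, (X : Ω → ℝ) ω ∂P) = μP := by
      funext X
      rw [hintP X, ← mul_assoc, mul_inv_cancel₀ hcpos.ne', one_mul]
    rw [e1]
    exact hμPne
  · -- dom(ρ*) ⊆ (ca_P)₊
    intro μ' hμ'
    obtain ⟨K, hKpos, hK⟩ := domK μ' hμ'
    have hlin' := hμ'.1.1
    have hpos' : ∀ X : BM Ω, 0 ≤ X → 0 ≤ μ' X := mu_pos hmonoρ hlin' hK
    refine ⟨hpos', ?_⟩
    obtain ⟨ν, hνfin, hνapply, hνint⟩ := exists_repr_measure μ' hlin' hpos'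
      ⟨μ' one, hpos' one (indBM_nonneg _ _), hMemBa μ' hlin' hpos'⟩
      (mu_cont_up hmonoρ hca hlin' hK)
    refine ⟨ν, hνfin, ?_, hνint⟩
    apply Measure.AbsolutelyContinuous.mk
    intro t ht hPt
    rw [hνapply t ht]
    have h1 := (hAiff t ht).1 hPt μ' hμ'
    rw [h1]
    simp
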